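/- Union step on roots satisfies the atomic equate specification: with X finite, f with ≤f antisymmetric, rx ry roots of f, and g = Function.update f rx ry, we have retr g = (retr f ∪ {(rx,ry),(ry,rx)})^* , where ^* denotes reflexive-transitive closure (which here coincides with equivalence closure since retr f is an equivalence relation). -/
import Mathlib


def lef {X : Type*} (f : X → X) (n m : X) : Prop :=
  Relation.ReflTransGen (fun a b => b = f a) n m

def eqf {X : Type*} (f : X → X) (n m : X) : Prop :=
  ∃ k, lef f n k ∧ lef f m k

def retr {X : Type*} (f : X → X) : Set (X × X) := {p | eqf f p.1 p.2}

section Aux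

variable {X : Type*} {f : X → X}

lemma lef_refl (f : X → X) (a : X) : lef f a a := Relation.ReflTransGen.refl

lemma lef_trans {a b c : X} (h1 : lef f a b) (h2 : lef f b c) : lef f a c :=
  Relation.ReflTransGen.trans h1 h2

lemma lef_root {a k : X} (ha : f a = a) (h : lef f a k) : k = a := by
  induction h with
  | refl => rfl
  | tail _ h2 ih => subst h2; rw [ih, ha]

lemma lef_comp {a b c : X} (h1 : lef f a b) : lef f a c → lef f b c ∨ lef f c b := by
  induction h1 using Relation.ReflTransGen.head_induction_on with
  | refl => exact fun h => Or.inl h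
  | head hstep hrest ih =>
    intro h2
    rcases Relation.ReflTransGen.cases_head h2 with rfl | ⟨d, hd, hrest'⟩
    · exact Or.inr (Relation.ReflTransGen.head hstep hrest)
    · subst hstep; subst hd; exact ih hrest'

lemma eqf_refl (f : X → X) (a : X) : eqf f a a := ⟨a, lef_refl f a, lef_refl f a⟩

lemma eqf_symm {a b : X} (h : eqf f a b) : eqf f b a := by
  obtain ⟨k, h1, h2⟩ := h; exact ⟨k, h2, h1⟩

lemma eqf_trans {a b c : X} (h1 : eqf f a b) (h2 : eqf f b c) : eqf f a c := by
  obtain ⟨k1, ha, hb⟩ := h1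
  obtain ⟨k2, hb', hc⟩ := h2
  rcases lef_comp hb hb' with h | h
  · exact ⟨k2, lef_trans ha h, hc⟩
  · exact ⟨k1, ha, lef_trans hc h⟩

/-- If `r` is a root and `eqf f n m` and `lef f m r`, then `lef f n r`. -/
lemma eqf_lef {n m r : X} (hr : f r = r) (h : eqf f n m) (hm : lef f m r) :
    lef f n r := by
  obtain ⟨k, h1, h2⟩ := h
  rcases lef_comp h2 hm with h | h
  · exact lef_trans h1 h
  · have : k = r := lef_root hr h
    exact this ▸ h1

end Aux

section Main

variable {X : Type*} [DecidableEq X] {f : X → X} {rx ry : X}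

lemma lef_update_iff (hrx : f rx = rx) (hry : f ry = ry) {n k : X} :
    lef (Function.update f rx ry) n k ↔ lef f n k ∨ (lef f n rx ∧ k = ry) := by
  constructor
  · intro h
    induction h using Relation.ReflTransGen.head_induction_on with
    | refl => exact Or.inl (lef_refl f k)
    | head hstep hrest ih =>
      rename_i a c
      by_cases ha : a = rx
      · have hc : c = ry := by rw [hstep, ha, Function.update_self]
        subst hc
        rcases ih with h | ⟨_, hk⟩
        · exact Or.inr ⟨by rw [ha]; exact lef_refl f rx, lef_root hry h⟩
        · exact Or.inr ⟨by rw [ha]; exact lef_refl f rx, hk⟩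
      · have hc : c = f a := by simpa [Function.update_of_ne ha] using hstep
        subst hc
        rcases ih with h | ⟨h, hk⟩
        · exact Or.inl (Relation.ReflTransGen.head rfl h)
        · exact Or.inr ⟨Relation.ReflTransGen.head rfl h, hk⟩
  · have key : ∀ {a b : X}, lef f a b → lef (Function.update f rx ry) a b := by
      intro a b h
      induction h using Relation.ReflTransGen.head_induction_on with
      | refl => exact Relation.ReflTransGen.refl
      | head hstep hrest ih =>
        rename_i a' c
        by_cases ha : a' = rx
        · have hc : c = a' := by rw [hstep, ha, hrx, ← ha]
          subst hc
          exact ih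
        · exact Relation.ReflTransGen.head
            (by rw [hstep, Function.update_of_ne ha]) ih
    rintro (h | ⟨h, rfl⟩)
    · exact key h
    · exact Relation.ReflTransGen.tail (key h) (by simp)

lemma eqf_update_iff (hrx : f rx = rx) (hry : f ry = ry) {n m : X} :
    eqf (Function.update f rx ry) n m ↔
      eqf f n m ∨ (lef f n rx ∧ lef f m ry) ∨ (lef f n ry ∧ lef f m rx) := by
  constructor
  · rintro ⟨k, h1, h2⟩
    rw [lef_update_iff hrx hry] at h1 h2
    rcases h1 with h1 | ⟨h1, rfl⟩
    · rcases h2 with h2 | ⟨h2, rfl⟩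
      · exact Or.inl ⟨_, h1, h2⟩
      · exact Or.inr (Or.inr ⟨h1, h2⟩)
    · rcases h2 with h2 | ⟨h2, _⟩
      · exact Or.inr (Or.inl ⟨h1, h2⟩)
      · exact Or.inl ⟨rx, h1, h2⟩
  · rintro (⟨k, h1, h2⟩ | ⟨h1, h2⟩ | ⟨h1, h2⟩)
    · exact ⟨k, (lef_update_iff hrx hry).2 (Or.inl h1),
        (lef_update_iff hrx hry).2 (Or.inl h2)⟩
    · exact ⟨ry, (lef_update_iff hrx hry).2 (Or.inr ⟨h1, rfl⟩),
        (lef_update_iff hrx hry).2 (Or.inl h2)⟩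
    · exact ⟨ry, (lef_update_iff hrx hry).2 (Or.inl h1),
        (lef_update_iff hrx hry).2 (Or.inr ⟨h2, rfl⟩)⟩

lemma rtg_iff (hrx : f rx = rx) (hry : f ry = ry) {n m : X} :
    Relation.ReflTransGen
        (fun a b => (a, b) ∈ retr f ∪ {(rx, ry), (ry, rx)}) n m ↔
      eqf f n m ∨ (lef f n rx ∧ lef f m ry) ∨ (lef f n ry ∧ lef f m rx) := by
  have hmem : ∀ a b : X, ((a, b) ∈ retr f ∪ ({(rx, ry), (ry, rx)} : Set (X × X))) ↔
      eqf f a b ∨ (a = rx ∧ b = ry) ∨ (a = ry ∧ b = rx) := by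
    intro a b
    simp only [retr, Set.mem_union, Set.mem_insert_iff, Set.mem_singleton_iff,
      Set.mem_setOf_eq, Prod.mk.injEq]
  constructor
  · intro h
    induction h with
    | refl => exact Or.inl (eqf_refl f n)
    | tail _ hstep ih =>
      rename_i b c _
      rw [hmem] at hstep
      rcases hstep with hbc | ⟨hb, hc⟩ | ⟨hb, hc⟩
      · rcases ih with h | ⟨h1, h2⟩ | ⟨h1, h2⟩
        · exact Or.inl (eqf_trans h hbc)
        · exact Or.inr (Or.inl ⟨h1, eqf_lef hry (eqf_symm hbc) h2⟩)
        · exact Or.inr (Or.inr ⟨h1, eqf_lef hrx (eqf_symm hbc) h2⟩)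
      · rw [hb] at ih
        rw [hc]
        rcases ih with h | ⟨h1, h2⟩ | ⟨h1, h2⟩
        · exact Or.inr (Or.inl ⟨eqf_lef hrx h (lef_refl f rx), lef_refl f ry⟩)
        · have hyx : ry = rx := lef_root hrx h2
          exact Or.inl ⟨rx, h1, by rw [hyx]; exact lef_refl f rx⟩
        · exact Or.inl ⟨ry, h1, lef_refl f ry⟩
      · rw [hb] at ih
        rw [hc]
        rcases ih with h | ⟨h1, h2⟩ | ⟨h1, h2⟩
        · exact Or.inr (Or.inr ⟨eqf_lef hry h (lef_refl f ry), lef_refl f rx⟩)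
        · exact Or.inl ⟨rx, h1, lef_refl f rx⟩
        · have hxy : rx = ry := lef_root hry h2
          exact Or.inl ⟨ry, h1, by rw [hxy]; exact lef_refl f ry⟩
  · rintro (h | ⟨h1, h2⟩ | ⟨h1, h2⟩)
    · exact Relation.ReflTransGen.single ((hmem n m).2 (Or.inl h))
    · exact Relation.ReflTransGen.head ((hmem n rx).2 (Or.inl ⟨rx, h1, lef_refl f rx⟩))
        (Relation.ReflTransGen.head ((hmem rx ry).2 (Or.inr (Or.inl ⟨rfl, rfl⟩)))
          (Relation.ReflTransGen.single ((hmem ry m).2 (Or.inl ⟨ry, lef_refl f ry, h2⟩))))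
    · exact Relation.ReflTransGen.head ((hmem n ry).2 (Or.inl ⟨ry, h1, lef_refl f ry⟩))
        (Relation.ReflTransGen.head ((hmem ry rx).2 (Or.inr (Or.inr ⟨rfl, rfl⟩)))
          (Relation.ReflTransGen.single ((hmem rx m).2 (Or.inl ⟨rx, lef_refl f rx, h2⟩))))

end Main

theorem stmt_13 {X : Type*} [Fintype X] [DecidableEq X] (f : X → X)
    (antisym : ∀ n m : X, lef f n m → lef f m n → n = m)
    (rx ry : X) (hrx : f rx = rx) (hry : f ry = ry) :
    ∀ n m : X, (n, m) ∈ retr (Function.update f rx ry) ↔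
      Relation.ReflTransGen
        (fun a b => (a, b) ∈ retr f ∪ {(rx, ry), (ry, rx)}) n m := by
  intro n m
  have h1 : (n, m) ∈ retr (Function.update f rx ry) ↔
      eqf (Function.update f rx ry) n m := Iff.rfl
  rw [h1, eqf_update_iff hrx hry, rtg_iff hrx hry]
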